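/- In a partially ordered vector space, if a positive vector x can be written as x = y + z with y and z disjoint, then both y and z are positive. -/

import Mathlib

/-- Two vectors are disjoint: the upper bounds of {x+y, -x-y} equal those of {x-y, y-x}. -/
def Disj {X : Type*} [AddCommGroup X] [PartialOrder X] (x y : X) : Prop :=
  upperBounds ({x + y, -x - y} : Set X) = upperBounds ({x - y, y - x} : Set X)

theorem pos_of_disjoint_decomposition {X : Type*} [AddCommGroup X] [PartialOrder X]
    [IsOrderedAddMonoid X] [Module ℝ X] [PosSMulStrictMono ℝ X] (y z : X) (hx : 0 ≤ y + z) (h : Disj y z) :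
    0 ≤ y ∧ 0 ≤ z := by
  have hmem : (y + z) ∈ upperBounds ({y + z, -y - z} : Set X) := by
    intro w hw
    rcases hw with rfl | hw
    · exact le_refl _
    · simp only [Set.mem_singleton_iff] at hw
      subst hw
      have h0 : -y - z ≤ 0 := by
        have := neg_nonpos.mpr hx
        rwa [neg_add, ← sub_eq_add_neg] at this
      exact h0.trans hx
  rw [h] at hmem
  have h1 : y - z ≤ y + z := hmem (by simp)
  have h2 : z - y ≤ y + z := hmem (by simp [Set.mem_insert_iff])
  have hz : (0:X) ≤ z + z := by
    have := sub_nonneg.mpr h1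
    simpa [sub_sub, add_sub_cancel_left] using this
  have hy : (0:X) ≤ y + y := by
    have := sub_nonneg.mpr h2
    have e : y + z - (z - y) = y + y := by abel
    simpa [e] using this
  have half : ∀ v : X, 0 ≤ v + v → 0 ≤ v := by
    intro v hv
    have : (0:X) ≤ (2⁻¹ : ℝ) • (v + v) := smul_nonneg (by norm_num) hv
    have e : (2⁻¹ : ℝ) • (v + v) = v := by
      rw [← two_smul ℝ v, ← mul_smul]; norm_num
    rwa [e] at this
  exact ⟨half y hy, half z hz⟩
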